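/- Let (X,d) be a complete separable metric space and μ ∈ P_X. Then the following three statements are equivalent: (i) ({μ}ᵘ)ᵘ = {μ}; (ii) there exists an x ∈ X such that μ = δ_x and such that for every y ∈ X, B₁(y) ⊆ B₁(x) implies x = y; (iii) the set ({μ}ᵘ)ᵘ has exactly one element. -/

import Mathlib

open MeasureTheory Metric Set TopologicalSpace

/-- The (one-sided) Lévy–Prokhorov distance of two Borel probability measures. -/
noncomputable def LPdist {X : Type*} [MetricSpace X] [MeasurableSpace X]
    (μ ν : ProbabilityMeasure X) : ℝ :=
  sInf {ε : ℝ | 0 < ε ∧ ∀ A : Set X, MeasurableSet A →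
    (μ : Measure X) A ≤ (ν : Measure X) (thickening ε A) + ENNReal.ofReal ε}

/-- The s-Lévy–Prokhorov distance. -/
noncomputable def LPsdist {X : Type*} [MetricSpace X] [MeasurableSpace X]
    (s : ℝ) (μ ν : ProbabilityMeasure X) : ℝ :=
  sInf {ε : ℝ | 0 < ε ∧ ∀ A : Set X, MeasurableSet A →
    ENNReal.ofReal s * (μ : Measure X) A ≤
      ENNReal.ofReal s * (ν : Measure X) (thickening ε A) + ENNReal.ofReal ε}

/-- The support of a Borel probability measure. -/
def mSupport {X : Type*} [MetricSpace X] [MeasurableSpace X]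
    (μ : ProbabilityMeasure X) : Set X :=
  {x : X | ∀ r : ℝ, 0 < r → 0 < (μ : Measure X) (ball x r)}

/-- The Dirac measure as a probability measure. -/
noncomputable def diracPM {X : Type*} [MeasurableSpace X] (x : X) : ProbabilityMeasure X :=
  ⟨Measure.dirac x, inferInstance⟩

/-- Finitely supported probability measures: finite convex combinations of Dirac measures. -/
def IsFinitelySupported {X : Type*} [MeasurableSpace X] (μ : ProbabilityMeasure X) : Prop :=
  ∃ (s : Finset X) (w : X → ℝ), (∀ x ∈ s, 0 < w x) ∧ (∑ x ∈ s, w x = 1) ∧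
    (μ : Measure X) = ∑ x ∈ s, ENNReal.ofReal (w x) • Measure.dirac x

/-- The unit distance set of a set of probability measures. -/
def unitDistSet {X : Type*} [MetricSpace X] [MeasurableSpace X]
    (𝒜 : Set (ProbabilityMeasure X)) : Set (ProbabilityMeasure X) :=
  {ν | ∀ μ ∈ 𝒜, LPdist μ ν = 1}

/-- The witness function. -/
noncomputable def witness {X : Type*} [MetricSpace X] [MeasurableSpace X]
    (μ : ProbabilityMeasure X) (x : X) : ℝ :=
  LPdist (diracPM x) μ

/-- The s-witness function. -/
noncomputable def switness {X : Type*} [MetricSpace X] [MeasurableSpace X]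
    (s : ℝ) (μ : ProbabilityMeasure X) (x : X) : ℝ :=
  LPsdist s (diracPM x) μ

section Aux
open scoped ENNReal

open MeasureTheory Metric Set TopologicalSpace

variable {X : Type*} [MetricSpace X] [MeasurableSpace X]

/-- The defining set of `LPdist`. -/
def LPS (μ ν : ProbabilityMeasure X) : Set ℝ :=
  {ε : ℝ | 0 < ε ∧ ∀ A : Set X, MeasurableSet A →
    (μ : Measure X) A ≤ (ν : Measure X) (thickening ε A) + ENNReal.ofReal ε}

lemma LPdist_eq_sInf (μ ν : ProbabilityMeasure X) : LPdist μ ν = sInf (LPS μ ν) := rfl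

lemma one_mem_LPS (μ ν : ProbabilityMeasure X) : (1 : ℝ) ∈ LPS μ ν := by
  refine ⟨one_pos, fun A hA => ?_⟩
  calc (μ : Measure X) A ≤ 1 := prob_le_one
    _ = ENNReal.ofReal 1 := by simp
    _ ≤ _ := self_le_add_left _ _

lemma LPS_bddBelow (μ ν : ProbabilityMeasure X) : BddBelow (LPS μ ν) :=
  ⟨0, fun _ hx => hx.1.le⟩

lemma LPdist_eq_one_iff (μ ν : ProbabilityMeasure X) :
    LPdist μ ν = 1 ↔ ∀ ε ∈ LPS μ ν, 1 ≤ ε := by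
  constructor
  · intro h ε hε
    have := csInf_le (LPS_bddBelow μ ν) hε
    rw [LPdist_eq_sInf] at h
    linarith
  · intro h
    rw [LPdist_eq_sInf]
    exact le_antisymm (csInf_le (LPS_bddBelow μ ν) (one_mem_LPS μ ν))
      (le_csInf ⟨1, one_mem_LPS μ ν⟩ h)

lemma LPS_subset [OpensMeasurableSpace X] (μ ν : ProbabilityMeasure X) :
    LPS μ ν ⊆ LPS ν μ := by
  rintro ε ⟨hε, h⟩
  refine ⟨hε, fun B hB => ?_⟩
  have hTB : MeasurableSet (thickening ε B) := isOpen_thickening.measurableSet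
  have hsub : thickening ε ((thickening ε B)ᶜ) ⊆ Bᶜ := by
    intro u hu hB'
    rcases mem_thickening_iff.1 hu with ⟨a, ha, hd⟩
    exact ha (mem_thickening_iff.2 ⟨u, hB', by rwa [dist_comm]⟩)
  have h2 : (μ : Measure X) ((thickening ε B)ᶜ) ≤ (ν : Measure X) Bᶜ + ENNReal.ofReal ε :=
    (h _ hTB.compl).trans (add_le_add (measure_mono hsub) le_rfl)
  have key : (ν : Measure X) B + (μ : Measure X) ((thickening ε B)ᶜ)
      ≤ ((μ : Measure X) (thickening ε B) + ENNReal.ofReal ε)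
          + (μ : Measure X) ((thickening ε B)ᶜ) := by
    calc (ν : Measure X) B + (μ : Measure X) ((thickening ε B)ᶜ)
        ≤ (ν : Measure X) B + ((ν : Measure X) Bᶜ + ENNReal.ofReal ε) := add_le_add le_rfl h2
      _ = ((ν : Measure X) B + (ν : Measure X) Bᶜ) + ENNReal.ofReal ε := by ring
      _ = 1 + ENNReal.ofReal ε := by rw [prob_add_prob_compl hB]
      _ = ((μ : Measure X) (thickening ε B) + (μ : Measure X) ((thickening ε B)ᶜ))
            + ENNReal.ofReal ε := by rw [prob_add_prob_compl hTB]
      _ = _ := by ring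
  exact (ENNReal.add_le_add_iff_right (measure_ne_top _ _)).1 key

lemma LPdist_symm [OpensMeasurableSpace X] (μ ν : ProbabilityMeasure X) :
    LPdist μ ν = LPdist ν μ := by
  rw [LPdist_eq_sInf, LPdist_eq_sInf,
    Set.Subset.antisymm (LPS_subset μ ν) (LPS_subset ν μ)]

lemma exists_null_ball_of_not_mem_mSupport {μ : ProbabilityMeasure X} {x : X}
    (hx : x ∉ mSupport μ) : ∃ r > 0, (μ : Measure X) (ball x r) = 0 := by
  by_contra h
  push_neg at h
  exact hx fun r hr => pos_iff_ne_zero.2 (h r hr)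

lemma isOpen_compl_mSupport (μ : ProbabilityMeasure X) : IsOpen (mSupport μ)ᶜ := by
  rw [Metric.isOpen_iff]
  intro x hx
  obtain ⟨r, hr, h0⟩ := exists_null_ball_of_not_mem_mSupport hx
  refine ⟨r / 2, by positivity, fun y hy hmem => ?_⟩
  have hsub : ball y (r / 2) ⊆ ball x r := by
    intro z hz
    have h1 := mem_ball.1 hz
    have h2 := mem_ball.1 hy
    exact mem_ball.2 (by have := dist_triangle z y x; linarith)
  have h3 : (μ : Measure X) (ball y (r / 2)) = 0 := measure_mono_null hsub h0
  have h4 := hmem (r / 2) (by positivity)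
  rw [h3] at h4
  exact lt_irrefl 0 h4

lemma measurableSet_mSupport [OpensMeasurableSpace X] (μ : ProbabilityMeasure X) :
    MeasurableSet (mSupport μ) := by
  have := (isOpen_compl_mSupport μ).measurableSet.compl
  rwa [compl_compl] at this

lemma measure_compl_mSupport [SecondCountableTopology X] (μ : ProbabilityMeasure X) :
    (μ : Measure X) (mSupport μ)ᶜ = 0 := by
  refine measure_null_of_locally_null _ fun x hx => ?_
  obtain ⟨r, hr, h0⟩ := exists_null_ball_of_not_mem_mSupport hx
  exact ⟨ball x r, mem_nhdsWithin_of_mem_nhds (ball_mem_nhds x hr), h0⟩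

lemma measure_mSupport [SecondCountableTopology X] [OpensMeasurableSpace X]
    (μ : ProbabilityMeasure X) : (μ : Measure X) (mSupport μ) = 1 := by
  have := prob_add_prob_compl (μ := (μ : Measure X)) (measurableSet_mSupport μ)
  rwa [measure_compl_mSupport, add_zero] at this

/-- Key characterisation: `LPdist μ ρ = 1` iff `ρ` gives no mass to the open
1-neighbourhood of the support of `μ`. -/
lemma LPdist_eq_one_iff_null [SecondCountableTopology X] [OpensMeasurableSpace X]
    (μ ρ : ProbabilityMeasure X) :
    LPdist μ ρ = 1 ↔ (ρ : Measure X) (thickening 1 (mSupport μ)) = 0 := by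
  rw [LPdist_eq_one_iff]
  constructor
  · intro h
    refine measure_null_of_locally_null _ fun z hz => ?_
    obtain ⟨w, hw, hD⟩ := mem_thickening_iff.1 hz
    set D := dist z w with hDdef
    have hD0 : 0 ≤ D := dist_nonneg
    set r : ℝ := (1 - D) / 4 with hrdef
    have hr : 0 < r := by rw [hrdef]; linarith
    refine ⟨ball z r, mem_nhdsWithin_of_mem_nhds (ball_mem_nhds z hr), ?_⟩
    by_contra hc0
    set c := (ρ : Measure X) (ball z r) with hcdef
    set m := (μ : Measure X) (ball w r) with hmdef
    have hm : 0 < m := hw r hr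
    have hq0c : 0 < c.toReal := ENNReal.toReal_pos hc0 (measure_ne_top _ _)
    have hq0m : 0 < m.toReal := ENNReal.toReal_pos hm.ne' (measure_ne_top _ _)
    set q : ℝ := min c.toReal m.toReal with hqdef
    have hq0 : 0 < q := lt_min hq0c hq0m
    have hq1 : q ≤ 1 := by
      refine le_trans (min_le_right _ _) ?_
      have : m ≤ 1 := prob_le_one
      calc m.toReal ≤ (1 : ℝ≥0∞).toReal := ENNReal.toReal_mono ENNReal.one_ne_top this
        _ = 1 := by simp
    set ε : ℝ := max ((1 + D) / 2) (1 - q / 2) with hεdef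
    have hε1 : ε < 1 := max_lt (by linarith) (by linarith)
    have hε0 : 0 < ε := lt_of_lt_of_le (by linarith : (0:ℝ) < (1 + D) / 2) (le_max_left _ _)
    have hεS : ε ∉ LPS μ ρ := fun hmem => absurd (h ε hmem) (not_le.2 hε1)
    have hA : ∃ A, MeasurableSet A ∧
        (ρ : Measure X) (thickening ε A) + ENNReal.ofReal ε < (μ : Measure X) A := by
      by_contra hA
      push_neg at hA
      exact hεS ⟨hε0, fun A mA => hA A mA⟩
    obtain ⟨A, hmA, hlt⟩ := hA
    have hAball : (A ∩ ball w r).Nonempty := by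
      by_contra hne
      rw [not_nonempty_iff_eq_empty] at hne
      have hdisj : Disjoint A (ball w r) := disjoint_iff_inter_eq_empty.2 hne
      have h1 : (μ : Measure X) A + m ≤ 1 := by
        rw [hmdef, ← measure_union hdisj measurableSet_ball]
        exact prob_le_one
      have h2 : ENNReal.ofReal ε < (μ : Measure X) A :=
        lt_of_le_of_lt (self_le_add_left _ _) hlt
      have h3 : (1 : ℝ≥0∞) < ENNReal.ofReal ε + m := by
        rw [show m = ENNReal.ofReal m.toReal from (ENNReal.ofReal_toReal (measure_ne_top _ _)).symm,
          ← ENNReal.ofReal_add hε0.le hq0m.le, ← ENNReal.ofReal_one]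
        refine ENNReal.ofReal_lt_ofReal_iff (by linarith) |>.2 ?_
        have : 1 - q / 2 ≤ ε := le_max_right _ _
        have : q ≤ m.toReal := min_le_right _ _
        linarith [le_max_right ((1 + D) / 2) (1 - q / 2)]
      have h4 : (1 : ℝ≥0∞) < (μ : Measure X) A + m :=
        lt_of_lt_of_le h3 (add_le_add h2.le le_rfl)
      exact absurd h1 (not_le.2 h4)
    obtain ⟨a, haA, haw⟩ := hAball
    have hsub : ball z r ⊆ thickening ε A := by
      intro u hu
      refine mem_thickening_iff.2 ⟨a, haA, ?_⟩
      have h1 := mem_ball.1 hu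
      have h2 := mem_ball.1 haw
      have h3 := dist_triangle4 u z w a
      have h4 : dist w a = dist a w := dist_comm w a
      have h5 : (1 + D) / 2 ≤ ε := le_max_left _ _
      calc dist u a ≤ dist u z + dist z w + dist w a := h3
        _ < r + D + r := by rw [h4]; linarith
        _ ≤ ε := by rw [hrdef]; linarith
    have hfin : ENNReal.ofReal (q + (1 - q / 2))
        ≤ (ρ : Measure X) (thickening ε A) + ENNReal.ofReal ε := by
      rw [ENNReal.ofReal_add hq0.le (by linarith)]
      refine add_le_add ?_ (ENNReal.ofReal_le_ofReal (le_max_right _ _))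
      calc ENNReal.ofReal q ≤ ENNReal.ofReal c.toReal :=
            ENNReal.ofReal_le_ofReal (min_le_left _ _)
        _ = c := ENNReal.ofReal_toReal (measure_ne_top _ _)
        _ ≤ _ := measure_mono hsub
    have hlast : ENNReal.ofReal (q + (1 - q / 2)) < 1 :=
      lt_of_le_of_lt hfin (lt_of_lt_of_le hlt prob_le_one)
    rw [ENNReal.ofReal_lt_one] at hlast
    linarith
  · intro h0 ε hε
    by_contra hlt
    rw [not_le] at hlt
    have hth : (ρ : Measure X) (thickening ε (mSupport μ)) = 0 :=
      measure_mono_null (thickening_mono hlt.le _) h0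
    have h1 := hε.2 (mSupport μ) (measurableSet_mSupport μ)
    rw [measure_mSupport, hth, zero_add] at h1
    have h2 : ENNReal.ofReal ε < 1 := ENNReal.ofReal_lt_one.2 hlt
    exact absurd h1 (not_le.2 h2)

lemma diracPM_coe (x : X) : ((diracPM x : ProbabilityMeasure X) : Measure X) = Measure.dirac x :=
  rfl

lemma mSupport_diracPM [OpensMeasurableSpace X] (x : X) :
    mSupport (diracPM x : ProbabilityMeasure X) = {x} := by
  ext y
  simp only [mSupport, mem_setOf_eq, mem_singleton_iff]
  constructor
  · intro h
    by_contra hne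
    have hd : 0 < dist y x := dist_pos.2 hne
    have h1 := h (dist y x) hd
    have hx : x ∉ ball y (dist y x) := by
      simp [mem_ball, dist_comm]
    rw [diracPM_coe, Measure.dirac_apply, indicator_of_notMem hx] at h1
    exact lt_irrefl 0 h1
  · rintro rfl r hr
    have hx : y ∈ ball y r := mem_ball_self hr
    rw [diracPM_coe, Measure.dirac_apply, indicator_of_mem hx]
    exact zero_lt_one

lemma eq_diracPM [OpensMeasurableSpace X] (ν : ProbabilityMeasure X) (x : X)
    (h : (ν : Measure X) {x} = 1) : ν = diracPM x := by
  apply Subtype.ext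
  refine Measure.ext fun A hA => ?_
  show (ν : Measure X) A = Measure.dirac x A
  by_cases hx : x ∈ A
  · have h1 : (ν : Measure X) A = 1 := le_antisymm prob_le_one (by
      calc (1 : ℝ≥0∞) = (ν : Measure X) {x} := h.symm
        _ ≤ (ν : Measure X) A := measure_mono (singleton_subset_iff.2 hx))
    rw [h1, Measure.dirac_apply, indicator_of_mem hx, Pi.one_apply]
  · have hsub : A ⊆ ({x} : Set X)ᶜ := fun a ha (he : a ∈ ({x} : Set X)) =>
      hx (mem_singleton_iff.1 he ▸ ha)
    have hc : (ν : Measure X) ({x} : Set X)ᶜ = 0 := by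
      have h2 := prob_add_prob_compl (μ := (ν : Measure X)) (measurableSet_singleton x)
      rw [h] at h2
      have h3 : (1 : ℝ≥0∞) + (ν : Measure X) ({x} : Set X)ᶜ = 1 + 0 := by rw [add_zero]; exact h2
      exact (ENNReal.add_right_inj ENNReal.one_ne_top).1 h3
    rw [measure_mono_null hsub hc, Measure.dirac_apply, indicator_of_notMem hx]

lemma diracPM_inj [OpensMeasurableSpace X] {x y : X}
    (h : (diracPM x : ProbabilityMeasure X) = diracPM y) : x = y := by
  by_contra hne
  have h1 : (Measure.dirac x : Measure X) {y} = Measure.dirac y {y} := by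
    rw [← diracPM_coe, ← diracPM_coe, h]
  rw [Measure.dirac_apply, Measure.dirac_apply, indicator_of_mem (mem_singleton y),
    indicator_of_notMem (by simpa using hne)] at h1
  simp at h1

lemma self_mem_uu [OpensMeasurableSpace X] (μ : ProbabilityMeasure X) :
    μ ∈ unitDistSet (unitDistSet {μ}) := fun ρ hρ => by
  rw [LPdist_symm]
  exact hρ μ rfl

end Aux
/-- Proposition 2.2: metric characterisation of (certain) Dirac measures. -/
theorem dirac_tfae {X : Type*} [MetricSpace X] [CompleteSpace X] [SeparableSpace X]
    [MeasurableSpace X] [BorelSpace X] (μ : ProbabilityMeasure X) :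
    List.TFAE
      [ unitDistSet (unitDistSet {μ}) = {μ},
        ∃ x : X, μ = diracPM x ∧ ∀ y : X, ball y 1 ⊆ ball x 1 → x = y,
        ∃ ν : ProbabilityMeasure X, unitDistSet (unitDistSet {μ}) = {ν} ] := by
  tfae_have 1 → 3 := fun h => ⟨μ, h⟩
  tfae_have 3 → 1 := by
    rintro ⟨ν, hν⟩
    have hμ : μ ∈ unitDistSet (unitDistSet {μ}) := self_mem_uu μ
    rw [hν] at hμ
    rw [hν, mem_singleton_iff.1 hμ]
  tfae_have 1 → 2 := by
    intro h
    have mem_uu : ∀ y : X, ball y 1 ⊆ thickening 1 (mSupport μ) →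
        diracPM y ∈ unitDistSet (unitDistSet {μ}) := by
      intro y hsub ρ hρ
      have h1 := (LPdist_eq_one_iff_null μ ρ).1 (hρ μ rfl)
      rw [LPdist_symm, LPdist_eq_one_iff_null, mSupport_diracPM, thickening_singleton]
      exact measure_mono_null hsub h1
    have key : ∀ y ∈ mSupport μ, μ = diracPM y := by
      intro y hy
      have hyu := mem_uu y (ball_subset_thickening hy 1)
      rw [h, mem_singleton_iff] at hyu
      exact hyu.symm
    have hne : (mSupport μ).Nonempty := by
      apply nonempty_of_measure_ne_zero (μ := (μ : Measure X))
      rw [measure_mSupport]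
      exact one_ne_zero
    obtain ⟨x, hx⟩ := hne
    refine ⟨x, key x hx, fun y hball => ?_⟩
    have hyu := mem_uu y (hball.trans (ball_subset_thickening hx 1))
    rw [h, mem_singleton_iff] at hyu
    exact diracPM_inj ((key x hx).symm.trans hyu.symm)
  tfae_have 2 → 1 := by
    rintro ⟨x, hμx, hmax⟩
    ext ν
    simp only [mem_singleton_iff]
    constructor
    · intro hν
      have hz : ∀ z : X, z ∉ ball x 1 → (ν : Measure X) (ball z 1) = 0 := by
        intro z hzx
        have hmem : diracPM z ∈ unitDistSet {μ} := by
          intro μ' hμ'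
          rw [mem_singleton_iff.1 hμ', hμx, LPdist_eq_one_iff_null, mSupport_diracPM,
            thickening_singleton, diracPM_coe, Measure.dirac_apply, indicator_of_notMem hzx]
        have h1 := hν (diracPM z) hmem
        rwa [LPdist_eq_one_iff_null, mSupport_diracPM, thickening_singleton] at h1
      set U : Set X := ⋃ z ∈ (ball x 1)ᶜ, ball z 1 with hU
      have hUopen : IsOpen U := isOpen_biUnion fun _ _ => isOpen_ball
      have hU0 : (ν : Measure X) U = 0 := by
        refine measure_null_of_locally_null _ fun u hu => ?_
        rcases mem_iUnion₂.1 hu with ⟨z, hzc, hz1⟩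
        exact ⟨ball z 1, mem_nhdsWithin_of_mem_nhds (isOpen_ball.mem_nhds hz1), hz z hzc⟩
      have hUc : Uᶜ = ({x} : Set X) := by
        ext y
        constructor
        · intro hy
          have hb : ball y 1 ⊆ ball x 1 := by
            intro z hzy
            by_contra hzx
            exact hy (mem_biUnion hzx (mem_ball.2 (by rw [dist_comm]; exact mem_ball.1 hzy)))
          exact mem_singleton_iff.2 (hmax y hb).symm
        · intro hy
          rw [mem_singleton_iff] at hy
          subst hy
          intro hyU
          rcases mem_iUnion₂.1 hyU with ⟨z, hzc, hz1⟩
          exact hzc (mem_ball.2 (by rw [dist_comm]; exact mem_ball.1 hz1))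
      have hx1 : (ν : Measure X) {x} = 1 := by
        rw [← hUc]
        have h2 := prob_add_prob_compl (μ := (ν : Measure X)) hUopen.measurableSet
        rwa [hU0, zero_add] at h2
      rw [hμx]
      exact eq_diracPM ν x hx1
    · intro hv
      rw [hv]
      exact self_mem_uu μ
  tfae_finish
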